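/- Let N ≥ 1 and 0 ≤ u, v < 2^{2^{N−1}}. Then −B_{uv}^{(N)}(z) = B_{û v}^{(N)}(z), where û := 2^{2^{N−1}} − 1 − u is the bitwise complement of u in 2^{N−1} bits, and B_{uv}^{(N)}(−z) = B_{u⊕v, v}^{(N)}(z), where u ⊕ v denotes the bitwise exclusive-or of u and v. -/
import Mathlib


/-- `bitd n i` is the `i`-th binary digit of `n` (0 or 1). -/
def bitd (n i : ℕ) : ℕ := if n.testBit i then 1 else 0

/-- The polynomial `s_k^{(N)}(z) = ∏_{i=0}^{N-2} (1 + (-1)^{k_i} z^{2^{i+1}})`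
(the empty product, for `N = 1`, being `1`). -/
noncomputable def sPoly (N k : ℕ) : Polynomial ℤ :=
  ∏ i ∈ Finset.range (N - 1),
    (1 + Polynomial.C ((-1 : ℤ) ^ bitd k i) * Polynomial.X ^ (2 ^ (i + 1)))

/-- The Bell polynomial `B_{uv}^{(N)}(z) = ∑_{k<2^{N-1}} (-1)^{u_k} z^{v_k} s_k^{(N)}(z)`. -/
noncomputable def BPoly (N u v : ℕ) : Polynomial ℤ :=
  ∑ k ∈ Finset.range (2 ^ (N - 1)),
    Polynomial.C ((-1 : ℤ) ^ bitd u k) * Polynomial.X ^ bitd v k * sPoly N k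

lemma sPoly_comp_neg (N k : ℕ) : (sPoly N k).comp (-Polynomial.X) = sPoly N k := by
  unfold sPoly
  rw [Polynomial.prod_comp]
  refine Finset.prod_congr rfl fun i _ => ?_
  have he : Even (2 ^ (i + 1)) := by
    exact (Nat.even_pow).2 ⟨even_two, by omega⟩
  simp [he.neg_pow]

/-- For `N ≥ 1` and `u, v < 2^{2^{N-1}}`:
`-B_{uv}^{(N)}(z) = B_{ûv}^{(N)}(z)` where `û = 2^{2^{N-1}} - 1 - u` is the bitwise
complement of `u` in `2^{N-1}` bits, and `B_{uv}^{(N)}(-z) = B_{u⊕v, v}^{(N)}(z)`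
where `⊕` is bitwise exclusive-or. -/
theorem stmt13 (N u v : ℕ) (hN : 1 ≤ N)
    (hu : u < 2 ^ 2 ^ (N - 1)) (hv : v < 2 ^ 2 ^ (N - 1)) :
    -BPoly N u v = BPoly N (2 ^ 2 ^ (N - 1) - 1 - u) v ∧
    (BPoly N u v).comp (-Polynomial.X) = BPoly N (u ^^^ v) v := by
  constructor
  · rw [BPoly, BPoly, ← Finset.sum_neg_distrib]
    refine Finset.sum_congr rfl fun k hk => ?_
    have hk' : k < 2 ^ (N - 1) := Finset.mem_range.mp hk
    have hbit : (2 ^ 2 ^ (N - 1) - 1 - u).testBit k = ! u.testBit k := by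
      have h1 : 2 ^ 2 ^ (N - 1) - 1 - u = 2 ^ 2 ^ (N - 1) - (u + 1) := by omega
      rw [h1, Nat.testBit_two_pow_sub_succ hu]
      simp [hk']
    unfold bitd
    rw [hbit]
    cases h : u.testBit k <;> simp <;> split_ifs <;> ring
  · simp only [BPoly, Polynomial.comp, Polynomial.eval₂_finset_sum]
    refine Finset.sum_congr rfl fun k hk => ?_
    show (Polynomial.C ((-1 : ℤ) ^ bitd u k) * Polynomial.X ^ bitd v k * sPoly N k).comp
        (-Polynomial.X) = _
    rw [Polynomial.mul_comp, Polynomial.mul_comp, Polynomial.C_comp, Polynomial.X_pow_comp,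
      sPoly_comp_neg]
    have hxor : (-1 : ℤ) ^ bitd (u ^^^ v) k = (-1) ^ bitd u k * (-1) ^ bitd v k := by
      unfold bitd
      rw [Nat.testBit_xor]
      cases u.testBit k <;> cases v.testBit k <;> simp
    rw [hxor]
    rw [neg_pow]
    unfold bitd
    cases v.testBit k <;> simp [mul_comm, mul_assoc, mul_left_comm] <;> split_ifs <;> ring
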